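/- Assume that for every finite graph G, every set of vertices A, every vertex 0 and every monotone cluster property f one has E(f(0)·1{0↔A}) ≥ min_{a∈A} E(f(a)·1{0↔A}), in the particular case f(g,ω) = |C_ω(g)| (cluster size). Then for every finite graph G, A ⊆ G, and vertices 0, b: P(0↔b) ≥ min_{a∈A} P(0↔A, a↔b). -/

import Mathlib

open scoped BigOperators

structure PercGraph (V E : Type) where
  ends : E → V × V
  p : E → ℝ

namespace PercGraph

variable {V E : Type} [DecidableEq V] [Fintype E] [DecidableEq E]

/-- Weight of a configuration: each edge `e` is open (`ω e = true`) with probability `p e`. -/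
def weight (G : PercGraph V E) (ω : E → Bool) : ℝ :=
  ∏ e, if ω e then G.p e else 1 - G.p e

/-- Probability of an event under the percolation measure. -/
noncomputable def prob (G : PercGraph V E) (S : Set (E → Bool)) : ℝ :=
  ∑ ω : E → Bool, Set.indicator S G.weight ω

/-- Expectation of a function under the percolation measure. -/
noncomputable def expec (G : PercGraph V E) (f : (E → Bool) → ℝ) : ℝ :=
  ∑ ω : E → Bool, f ω * G.weight ω

/-- Two vertices are adjacent via an open edge in configuration `ω`. -/
def adj (G : PercGraph V E) (ω : E → Bool) (x y : V) : Prop :=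
  ∃ e, ω e = true ∧ (G.ends e = (x, y) ∨ G.ends e = (y, x))

/-- `x` and `y` are connected by a path of open edges. -/
def Conn (G : PercGraph V E) (ω : E → Bool) (x y : V) : Prop :=
  Relation.ReflTransGen (G.adj ω) x y

/-- The union of the open clusters of the vertices of `A`. -/
def cluster (G : PercGraph V E) (ω : E → Bool) (A : Set V) : Set V :=
  {y | ∃ a ∈ A, G.Conn ω a y}

/-- The event `x ↔ y`. -/
def connEvent (G : PercGraph V E) (x y : V) : Set (E → Bool) :=
  {ω | G.Conn ω x y}

/-- The event `x ↔ A`. -/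
def connTo (G : PercGraph V E) (x : V) (A : Set V) : Set (E → Bool) :=
  {ω | ∃ a ∈ A, G.Conn ω x a}

/-- The event `A ↮ B`. -/
def disconn (G : PercGraph V E) (A B : Set V) : Set (E → Bool) :=
  {ω | ∀ a ∈ A, ∀ b ∈ B, ¬ G.Conn ω a b}

def IncreasingEvent (S : Set (E → Bool)) : Prop :=
  ∀ ⦃ω ω' : E → Bool⦄, (∀ e, ω e = true → ω' e = true) → ω ∈ S → ω' ∈ S

def DecreasingEvent (S : Set (E → Bool)) : Prop :=
  ∀ ⦃ω ω' : E → Bool⦄, (∀ e, ω e = true → ω' e = true) → ω' ∈ S → ω ∈ S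

def IncreasingFun (f : (E → Bool) → ℝ) : Prop :=
  ∀ ⦃ω ω' : E → Bool⦄, (∀ e, ω e = true → ω' e = true) → f ω ≤ f ω'

/-- `f` is determined by the cluster of `A`. -/
def ClusterDetermined (G : PercGraph V E) (A : Set V) (f : (E → Bool) → ℝ) : Prop :=
  ∀ ω ω', G.cluster ω A = G.cluster ω' A → f ω = f ω'

/-- The event `S` is determined by the cluster of `A`. -/
def ClusterDeterminedEvent (G : PercGraph V E) (A : Set V) (S : Set (E → Bool)) : Prop :=
  ∀ ω ω', G.cluster ω A = G.cluster ω' A → (ω ∈ S ↔ ω' ∈ S)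

noncomputable def condProb (G : PercGraph V E) (S T : Set (E → Bool)) : ℝ :=
  G.prob (S ∩ T) / G.prob T

noncomputable def condExpec (G : PercGraph V E) (f : (E → Bool) → ℝ) (T : Set (E → Bool)) : ℝ :=
  G.expec (T.indicator f) / G.prob T

/-- The edge `e` is incident to the vertex `x`. -/
def incident (G : PercGraph V E) (x : V) (e : E) : Prop :=
  (G.ends e).1 = x ∨ (G.ends e).2 = x

/-- The other endpoint of an edge incident to `x`. -/
def otherEnd (G : PercGraph V E) (x : V) (e : E) : V :=
  if (G.ends e).1 = x then (G.ends e).2 else (G.ends e).1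

/-- The graph `G ∖ W`: delete the vertices of `W` and all incident edges. -/
def delete (G : PercGraph V E) (W : Finset V) :
    PercGraph V {e : E // (G.ends e).1 ∉ W ∧ (G.ends e).2 ∉ W} :=
  ⟨fun e => G.ends e.1, fun e => G.p e.1⟩

/-- The graph `G` with the probability of edge `e` replaced by `q`. -/
def withEdgeProb (G : PercGraph V E) (e : E) (q : ℝ) : PercGraph V E :=
  ⟨G.ends, Function.update G.p e q⟩

/-- Contraction of the edge `e`: set its probability to 1. -/
def contract (G : PercGraph V E) (e : E) : PercGraph V E :=
  G.withEdgeProb e 1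

/-- The event that `e` is pivotal for `U`. -/
def pivotal (e : E) (U : Set (E → Bool)) : Set (E → Bool) :=
  {ω | ¬ ((Function.update ω e true ∈ U) ↔ (Function.update ω e false ∈ U))}

/-- All edge probabilities lie in `[0,1]`. -/
def ProbValid (G : PercGraph V E) : Prop := ∀ e, 0 ≤ G.p e ∧ G.p e ≤ 1

end PercGraph

namespace PercPendant

open PercGraph

variable {V E : Type} [DecidableEq V] [Fintype E] [DecidableEq E]

/-- `G` with `k` pendant vertices attached to `b` by edges of probability 1. -/
def ext (G : PercGraph V E) (b : V) (k : ℕ) : PercGraph (V ⊕ Fin k) (E ⊕ Fin k) where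
  ends := Sum.elim (fun e => (Sum.inl (G.ends e).1, Sum.inl (G.ends e).2))
      (fun i => (Sum.inl b, Sum.inr i))
  p := Sum.elim G.p (fun _ => 1)

/-- Extend a configuration by opening all pendant edges. -/
def extCfg (k : ℕ) (ω : E → Bool) : E ⊕ Fin k → Bool := Sum.elim ω (fun _ => true)

lemma ext_valid {G : PercGraph V E} (hG : G.ProbValid) (b : V) (k : ℕ) :
    (ext G b k).ProbValid := by
  rintro (e | i)
  · exact hG e
  · constructor <;> simp [ext]

lemma weight_nonneg {G : PercGraph V E} (hG : G.ProbValid) (ω : E → Bool) :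
    0 ≤ G.weight ω := by
  refine Finset.prod_nonneg fun e _ => ?_
  rcases hG e with ⟨h1, h2⟩
  split <;> linarith

lemma expec_ext (G : PercGraph V E) (b : V) (k : ℕ) (F : ((E ⊕ Fin k) → Bool) → ℝ) :
    (ext G b k).expec F = ∑ ω : E → Bool, F (extCfg k ω) * G.weight ω := by
  classical
  rw [PercGraph.expec,
    ← Equiv.sum_comp (Equiv.sumArrowEquivProdArrow E (Fin k) Bool).symm]
  rw [Fintype.sum_prod_type]
  refine Finset.sum_congr rfl fun ω _ => ?_
  rw [Finset.sum_eq_single (fun _ => true)]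
  · have h1 : (Equiv.sumArrowEquivProdArrow E (Fin k) Bool).symm (ω, fun _ => true)
        = extCfg k ω := by
      funext x; cases x <;> rfl
    rw [h1]
    congr 1
    rw [PercGraph.weight, PercGraph.weight, Fintype.prod_sum_type]
    have h2 : ∀ i : Fin k,
        (if extCfg k ω (Sum.inr i) then (ext G b k).p (Sum.inr i)
          else 1 - (ext G b k).p (Sum.inr i)) = 1 := by
      intro i; simp [extCfg, ext]
    rw [Finset.prod_congr rfl (fun i _ => h2 i)]
    simp [extCfg, ext]
    congr
  · intro τ _ hτ
    have : ∃ i, τ i = false := by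
      by_contra hc
      push_neg at hc
      exact hτ (funext fun i => by simpa using hc i)
    obtain ⟨i, hi⟩ := this
    have hzero : (ext G b k).weight
        ((Equiv.sumArrowEquivProdArrow E (Fin k) Bool).symm (ω, τ)) = 0 := by
      rw [PercGraph.weight]
      refine Finset.prod_eq_zero (Finset.mem_univ (Sum.inr i)) ?_
      have : (Equiv.sumArrowEquivProdArrow E (Fin k) Bool).symm (ω, τ) (Sum.inr i)
          = τ i := rfl
      rw [this, hi]
      simp [ext]
    rw [hzero, mul_zero]
  · intro h; exact absurd (Finset.mem_univ _) h

/-- Projection of the extended vertex set collapsing pendants to `b`. -/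
def proj (b : V) {k : ℕ} : V ⊕ Fin k → V := Sum.elim id (fun _ => b)

lemma conn_proj {G : PercGraph V E} {b : V} {k : ℕ} {ω' : E ⊕ Fin k → Bool}
    {u v : V ⊕ Fin k} (h : (ext G b k).Conn ω' u v) :
    G.Conn (fun e => ω' (Sum.inl e)) (proj b u) (proj b v) := by
  induction h with
  | refl => exact Relation.ReflTransGen.refl
  | @tail w v hwv hadj ih =>
    obtain ⟨e, he, hends⟩ := hadj
    cases e with
    | inl e =>
      have hend : (ext G b k).ends (Sum.inl e)
          = (Sum.inl (G.ends e).1, Sum.inl (G.ends e).2) := rfl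
      rcases hends with h1 | h1 <;> rw [hend] at h1 <;>
        obtain ⟨ha, hb⟩ := Prod.mk.inj h1
      · refine ih.tail ⟨e, he, Or.inl ?_⟩
        rw [← ha, ← hb]; simp [proj]
      · refine ih.tail ⟨e, he, Or.inr ?_⟩
        rw [← ha, ← hb]; simp [proj]
    | inr i =>
      have hend : (ext G b k).ends (Sum.inr i) = (Sum.inl b, Sum.inr i) := rfl
      rcases hends with h1 | h1 <;> rw [hend] at h1 <;>
        obtain ⟨ha, hb⟩ := Prod.mk.inj h1 <;> subst ha <;> subst hb <;>
        simpa [proj] using ih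

lemma conn_lift {G : PercGraph V E} {b : V} {k : ℕ} {ω : E → Bool} {x y : V}
    (h : G.Conn ω x y) :
    (ext G b k).Conn (extCfg k ω) (Sum.inl x) (Sum.inl y) := by
  induction h with
  | refl => exact Relation.ReflTransGen.refl
  | @tail w v hwv hadj ih =>
    obtain ⟨e, he, hends⟩ := hadj
    refine ih.tail ⟨Sum.inl e, by simpa [extCfg] using he, ?_⟩
    have hend : (ext G b k).ends (Sum.inl e)
        = (Sum.inl (G.ends e).1, Sum.inl (G.ends e).2) := rfl
    rcases hends with h1 | h1
    · exact Or.inl (by rw [hend, h1])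
    · exact Or.inr (by rw [hend, h1])

lemma conn_inl_iff {G : PercGraph V E} {b : V} {k : ℕ} {ω : E → Bool} {x y : V} :
    (ext G b k).Conn (extCfg k ω) (Sum.inl x) (Sum.inl y) ↔ G.Conn ω x y := by
  constructor
  · intro h
    have := conn_proj h
    simpa [proj, extCfg] using this
  · exact conn_lift

lemma conn_inr {G : PercGraph V E} {b : V} {k : ℕ} {ω : E → Bool} {a : V}
    (h : G.Conn ω a b) (i : Fin k) :
    (ext G b k).Conn (extCfg k ω) (Sum.inl a) (Sum.inr i) :=
  (conn_lift h).tail ⟨Sum.inr i, rfl, Or.inl rfl⟩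

variable [Fintype V]

lemma k_le_ncard {G : PercGraph V E} {b : V} {k : ℕ} {ω : E → Bool} {a : V}
    (h : G.Conn ω a b) :
    k ≤ ((ext G b k).cluster (extCfg k ω) {Sum.inl a}).ncard := by
  have hsub : Set.range (Sum.inr : Fin k → V ⊕ Fin k)
      ⊆ (ext G b k).cluster (extCfg k ω) {Sum.inl a} := by
    rintro _ ⟨i, rfl⟩
    exact ⟨Sum.inl a, rfl, conn_inr h i⟩
  have h1 : (Set.range (Sum.inr : Fin k → V ⊕ Fin k)).ncard = k := by
    rw [Set.ncard_eq_toFinset_card']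
    simp [Set.toFinset_range, Finset.card_image_of_injective _ Sum.inr_injective]
  calc k = (Set.range (Sum.inr : Fin k → V ⊕ Fin k)).ncard := h1.symm
    _ ≤ _ := Set.ncard_le_ncard hsub (Set.toFinite _)

lemma ncard_le_card_add {G : PercGraph V E} {b : V} {k : ℕ} {ω' : E ⊕ Fin k → Bool}
    {x₀ : V} :
    ((ext G b k).cluster ω' {Sum.inl x₀}).ncard ≤ Fintype.card V + k := by
  calc ((ext G b k).cluster ω' {Sum.inl x₀}).ncard
      ≤ (Set.univ : Set (V ⊕ Fin k)).ncard :=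
        Set.ncard_le_ncard (Set.subset_univ _) Set.finite_univ
    _ = Fintype.card V + k := by
        rw [Set.ncard_univ, Nat.card_eq_fintype_card, Fintype.card_sum, Fintype.card_fin]

lemma ncard_le_of_not_conn {G : PercGraph V E} {b : V} {k : ℕ} {ω : E → Bool}
    {x₀ : V} (h : ¬ G.Conn ω x₀ b) :
    ((ext G b k).cluster (extCfg k ω) {Sum.inl x₀}).ncard ≤ Fintype.card V := by
  have hsub : (ext G b k).cluster (extCfg k ω) {Sum.inl x₀}
      ⊆ Set.range (Sum.inl : V → V ⊕ Fin k) := by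
    rintro y ⟨z, hz, hconn⟩
    rcases Set.mem_singleton_iff.mp hz with rfl
    cases y with
    | inl v => exact ⟨v, rfl⟩
    | inr i =>
      exfalso
      apply h
      have := conn_proj hconn
      simpa [proj, extCfg] using this
  have h1 : (Set.range (Sum.inl : V → V ⊕ Fin k)).ncard = Fintype.card V := by
    rw [Set.ncard_eq_toFinset_card']
    simp [Set.toFinset_range, Finset.card_image_of_injective _ Sum.inl_injective]
  calc _ ≤ (Set.range (Sum.inl : V → V ⊕ Fin k)).ncard :=
        Set.ncard_le_ncard hsub (Set.finite_range _)
    _ = Fintype.card V := h1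

lemma mem_connTo_ext {G : PercGraph V E} {b : V} {k : ℕ} {ω : E → Bool} {x₀ : V}
    {A : Finset V} :
    extCfg k ω ∈ (ext G b k).connTo (Sum.inl x₀)
        ↑(A.image (Sum.inl : V → V ⊕ Fin k))
      ↔ ω ∈ G.connTo x₀ ↑A := by
  constructor
  · rintro ⟨a', ha', hc⟩
    rw [Finset.coe_image, Set.mem_image] at ha'
    obtain ⟨a, ha, rfl⟩ := ha'
    exact ⟨a, ha, conn_inl_iff.mp hc⟩
  · rintro ⟨a, ha, hc⟩
    refine ⟨Sum.inl a, ?_, conn_lift hc⟩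
    rw [Finset.coe_image]
    exact Set.mem_image_of_mem _ ha

end PercPendant


/-- if the monotone-cluster-property conjecture holds for cluster
size on every finite graph, then the pre-FKG conjecture holds on every finite graph. -/
theorem preFKG_of_clusterSize
    (H : ∀ (V E : Type) [Fintype V] [DecidableEq V] [Fintype E] [DecidableEq E]
        (G : PercGraph V E), G.ProbValid →
        ∀ (A : Finset V) (hA : A.Nonempty) (x₀ : V),
        A.inf' hA (fun a => G.expec (Set.indicator (G.connTo x₀ ↑A)
            (fun ω => ((G.cluster ω {a}).ncard : ℝ))))
          ≤ G.expec (Set.indicator (G.connTo x₀ ↑A)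
            (fun ω => ((G.cluster ω {x₀}).ncard : ℝ)))) :
    ∀ (V E : Type) [Fintype V] [DecidableEq V] [Fintype E] [DecidableEq E]
      (G : PercGraph V E), G.ProbValid →
      ∀ (A : Finset V) (hA : A.Nonempty) (x₀ b : V),
      A.inf' hA (fun a => G.prob (G.connTo x₀ ↑A ∩ G.connEvent a b))
        ≤ G.prob (G.connEvent x₀ b) := by
  intro V E _ _ _ _ G hG A hA x₀ b
  classical
  have key : ∀ k : ℕ,
      (k : ℝ) * (A.inf' hA (fun a => G.prob (G.connTo x₀ ↑A ∩ G.connEvent a b)))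
        ≤ (Fintype.card V : ℝ) * (∑ ω : E → Bool, G.weight ω)
            + (k : ℝ) * G.prob (G.connEvent x₀ b) := by
    intro k
    have hmain := H (V ⊕ Fin k) (E ⊕ Fin k) (PercPendant.ext G b k)
      (PercPendant.ext_valid hG b k) (A.image Sum.inl) (hA.image _) (Sum.inl x₀)
    refine le_trans (le_trans ?_ hmain) ?_
    · -- lower bound on the inf'
      refine Finset.le_inf' _ _ ?_
      intro a' ha'
      rw [Finset.mem_image] at ha'
      obtain ⟨a, ha, rfl⟩ := ha'
      have h1 : A.inf' hA (fun a => G.prob (G.connTo x₀ ↑A ∩ G.connEvent a b))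
          ≤ G.prob (G.connTo x₀ ↑A ∩ G.connEvent a b) := Finset.inf'_le _ ha
      have h2 : (k : ℝ) * G.prob (G.connTo x₀ ↑A ∩ G.connEvent a b)
          ≤ (PercPendant.ext G b k).expec
              (Set.indicator ((PercPendant.ext G b k).connTo (Sum.inl x₀)
                  ↑(A.image (Sum.inl : V → V ⊕ Fin k)))
                (fun ω' => (((PercPendant.ext G b k).cluster ω' {Sum.inl a}).ncard : ℝ))) := by
        rw [PercPendant.expec_ext, PercGraph.prob, Finset.mul_sum]
        refine Finset.sum_le_sum fun ω _ => ?_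
        have hw : 0 ≤ G.weight ω := PercPendant.weight_nonneg hG ω
        by_cases hω : ω ∈ G.connTo x₀ ↑A ∩ G.connEvent a b
        · rw [Set.indicator_of_mem hω,
            Set.indicator_of_mem (PercPendant.mem_connTo_ext.mpr hω.1)]
          exact mul_le_mul_of_nonneg_right
            (by exact_mod_cast PercPendant.k_le_ncard hω.2) hw
        · rw [Set.indicator_of_notMem hω, mul_zero]
          exact mul_nonneg (Set.indicator_nonneg (fun _ _ => by positivity) _) hw
      calc (k : ℝ) * (A.inf' hA (fun a => G.prob (G.connTo x₀ ↑A ∩ G.connEvent a b)))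
          ≤ (k : ℝ) * G.prob (G.connTo x₀ ↑A ∩ G.connEvent a b) :=
            mul_le_mul_of_nonneg_left h1 (Nat.cast_nonneg k)
        _ ≤ _ := h2
    · -- upper bound on the expectation at x₀
      rw [PercPendant.expec_ext, PercGraph.prob, Finset.mul_sum, Finset.mul_sum,
        ← Finset.sum_add_distrib]
      refine Finset.sum_le_sum fun ω _ => ?_
      have hw : 0 ≤ G.weight ω := PercPendant.weight_nonneg hG ω
      by_cases hS : PercPendant.extCfg k ω ∈ (PercPendant.ext G b k).connTo (Sum.inl x₀)
          ↑(A.image (Sum.inl : V → V ⊕ Fin k))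
      · rw [Set.indicator_of_mem hS]
        by_cases hcb : G.Conn ω x₀ b
        · rw [Set.indicator_of_mem (show ω ∈ G.connEvent x₀ b from hcb)]
          have hb1 : (((PercPendant.ext G b k).cluster (PercPendant.extCfg k ω)
              {Sum.inl x₀}).ncard : ℝ) ≤ (Fintype.card V : ℝ) + (k : ℝ) := by
            exact_mod_cast PercPendant.ncard_le_card_add
          nlinarith [mul_le_mul_of_nonneg_right hb1 hw]
        · rw [Set.indicator_of_notMem (show ω ∉ G.connEvent x₀ b from hcb), mul_zero, add_zero]
          have hb1 : (((PercPendant.ext G b k).cluster (PercPendant.extCfg k ω)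
              {Sum.inl x₀}).ncard : ℝ) ≤ (Fintype.card V : ℝ) := by
            exact_mod_cast PercPendant.ncard_le_of_not_conn hcb
          exact mul_le_mul_of_nonneg_right hb1 hw
      · rw [Set.indicator_of_notMem hS, zero_mul]
        have h2 : 0 ≤ Set.indicator (G.connEvent x₀ b) G.weight ω :=
          Set.indicator_nonneg (fun ω' _ => PercPendant.weight_nonneg hG ω') ω
        positivity
  set m := A.inf' hA (fun a => G.prob (G.connTo x₀ ↑A ∩ G.connEvent a b)) with hm
  set P := G.prob (G.connEvent x₀ b) with hP
  set CW := (Fintype.card V : ℝ) * (∑ ω : E → Bool, G.weight ω) with hCW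
  by_contra hcon
  push_neg at hcon
  have hd : 0 < m - P := sub_pos.2 hcon
  have hCW0 : 0 ≤ CW := by simpa using key 0
  obtain ⟨k, hk⟩ := exists_nat_gt (CW / (m - P))
  have h1 := key k
  have h2 : CW < (k : ℝ) * (m - P) := (div_lt_iff₀ hd).mp hk
  have h3 : (k : ℝ) * (m - P) = (k : ℝ) * m - (k : ℝ) * P := by ring
  linarith
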